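/- For every real number k > 0 and real p ≥ 1, the ratio Γ(k+x)^p / (Γ(x)^{p-1} · Γ(kp+x)) converges to 1 as x → ∞ (through positive reals). Consequently, the quantity (Γ(kp+1)/Γ(k+1)^p) · Γ(k+x)^p/(Γ(x)^{p-1}Γ(kp+x)) converges to Γ(kp+1)/Γ(k+1)^p. -/

import Mathlib

open Real Filter

-- x/(x+a) → 1
lemma aux_div_tendsto (a : ℝ) : Tendsto (fun x : ℝ => x / (x + a)) atTop (nhds 1) := by
  have h : Tendsto (fun x : ℝ => a / (x + a)) atTop (nhds 0) :=
    tendsto_const_nhds.div_atTop (tendsto_atTop_add_const_right _ a tendsto_id)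
  have : Tendsto (fun x : ℝ => 1 - a / (x + a)) atTop (nhds (1 - 0)) :=
    tendsto_const_nhds.sub h
  rw [sub_zero] at this
  refine this.congr' ?_
  filter_upwards [eventually_gt_atTop (max 0 (-a))] with x hx
  have hxa : x + a ≠ 0 := by
    have := lt_of_le_of_lt (le_max_right 0 (-a)) hx; linarith
  field_simp
  ring

lemma aux_div_tendsto' (a : ℝ) : Tendsto (fun x : ℝ => (x + a) / x) atTop (nhds 1) := by
  have h : Tendsto (fun x : ℝ => a / x) atTop (nhds 0) :=
    tendsto_const_nhds.div_atTop tendsto_id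
  have : Tendsto (fun x : ℝ => 1 + a / x) atTop (nhds (1 + 0)) := tendsto_const_nhds.add h
  rw [add_zero] at this
  refine this.congr' ?_
  filter_upwards [eventually_gt_atTop 0] with x hx
  rw [add_div, div_self hx.ne']

lemma wendel_aux : ∀ n : ℕ, ∀ a : ℝ, 0 < a → a ≤ n →
    Tendsto (fun x : ℝ => Gamma (x + a) / (Gamma x * x ^ a)) atTop (nhds 1) := by
  intro n
  induction n with
  | zero => intro a ha ha'; exact absurd (ha.trans_le ha') (by norm_num)
  | succ n ih =>
    intro a ha ha'
    by_cases hle : a ≤ n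
    · exact ih a ha hle
    push_neg at hle
    rcases Nat.eq_zero_or_pos n with hn | hn
    · -- 0 < a ≤ 1
      subst hn
      have ha1 : a ≤ 1 := by simpa using ha'
      rcases eq_or_lt_of_le ha1 with rfl | ha1
      · -- a = 1
        refine tendsto_const_nhds.congr' ?_
        filter_upwards [eventually_gt_atTop 0] with x hx
        have hG := Gamma_pos_of_pos hx
        rw [Gamma_add_one hx.ne', rpow_one]
        field_simp
      · -- 0 < a < 1 : squeeze
        refine tendsto_of_tendsto_of_tendsto_of_le_of_le'
          (g := fun x : ℝ => (x / (x + a)) ^ (1 - a)) (h := fun _ => (1 : ℝ)) ?_ tendsto_const_nhds ?_ ?_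
        · have h1 := aux_div_tendsto a
          have : Tendsto (fun x : ℝ => (x / (x + a)) ^ (1 - a)) atTop (nhds ((1:ℝ) ^ (1 - a))) :=
            h1.rpow_const (Or.inl one_ne_zero)
          rwa [one_rpow] at this
        · -- lower bound
          filter_upwards [eventually_gt_atTop 0] with x hx
          have hxa : 0 < x + a := by linarith
          have hG := Gamma_pos_of_pos hx
          have hGa := Gamma_pos_of_pos hxa
          -- Γ(x+1) ≤ Γ(x+a)^a * Γ(x+a+1)^(1-a)
          have key := Gamma_mul_add_mul_le_rpow_Gamma_mul_rpow_Gamma hxa (by linarith : (0:ℝ) < x + a + 1) ha (by linarith : (0:ℝ) < 1 - a) (by ring)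
          have e1 : a * (x + a) + (1 - a) * (x + a + 1) = x + 1 := by ring
          rw [e1, Gamma_add_one hx.ne', Gamma_add_one hxa.ne'] at key
          -- key : Γ(x) * x ≤ Γ(x+a)^a * ((x+a)*Γ(x+a))^(1-a)
          have e2 : Gamma (x+a) ^ a * ((x+a) * Gamma (x+a)) ^ (1-a)
              = Gamma (x+a) * (x+a) ^ (1-a) := by
            rw [mul_rpow hxa.le hGa.le,
              show Gamma (x+a) ^ a * ((x+a) ^ (1-a) * Gamma (x+a) ^ (1-a))
                = Gamma (x+a) ^ a * Gamma (x+a) ^ (1-a) * (x+a) ^ (1-a) from by ring,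
              ← rpow_add hGa]
            norm_num
          rw [e2] at key
          -- now: x * Γ x ≤ Γ(x+a) * (x+a)^(1-a)
          rw [div_rpow hx.le hxa.le,
            div_le_div_iff₀ (rpow_pos_of_pos hxa _) (by positivity)]
          calc x ^ (1-a) * (Gamma x * x ^ a) = x ^ ((1-a)+a) * Gamma x := by
                rw [rpow_add hx]; ring
            _ = x * Gamma x := by norm_num
            _ ≤ Gamma (x+a) * (x+a) ^ (1-a) := key
        · -- upper bound ≤ 1
          filter_upwards [eventually_gt_atTop 0] with x hx
          have hG := Gamma_pos_of_pos hx
          have key := Gamma_mul_add_mul_le_rpow_Gamma_mul_rpow_Gamma hx (by linarith : (0:ℝ) < x + 1) (by linarith : (0:ℝ) < 1 - a) ha (by ring)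
          have e1 : (1 - a) * x + a * (x + 1) = x + a := by ring
          rw [e1, Gamma_add_one hx.ne'] at key
          have e2 : Gamma x ^ (1-a) * (x * Gamma x) ^ a = Gamma x * x ^ a := by
            rw [mul_rpow hx.le hG.le,
              show Gamma x ^ (1-a) * (x ^ a * Gamma x ^ a)
                = Gamma x ^ (1-a) * Gamma x ^ a * x ^ a from by ring,
              ← rpow_add hG]
            norm_num
          rw [e2] at key
          rw [div_le_one (by positivity)]
          exact key
    · -- a > 1 case (since n ≥ 1, a > n ≥ 1)
      have ha1 : (1:ℝ) < a := lt_of_le_of_lt (by exact_mod_cast hn) hle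
      have ih' := ih (a - 1) (by linarith) (by push_cast at ha' ⊢; linarith)
      have h2 := aux_div_tendsto' (a - 1)
      have := ih'.mul h2
      rw [one_mul] at this
      refine this.congr' ?_
      filter_upwards [eventually_gt_atTop 0] with x hx
      have hxa : 0 < x + (a - 1) := by linarith
      have hG := Gamma_pos_of_pos hx
      have hGa := Gamma_pos_of_pos hxa
      have e : x + a = (x + (a - 1)) + 1 := by ring
      rw [e, Gamma_add_one hxa.ne']
      have ex : x ^ a = x ^ (a - 1) * x := by
        rw [← rpow_add_one hx.ne' (a-1)]; ring_nf
      rw [ex]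
      field_simp

lemma wendel (a : ℝ) (ha : 0 < a) :
    Tendsto (fun x : ℝ => Gamma (x + a) / (Gamma x * x ^ a)) atTop (nhds 1) :=
  wendel_aux ⌈a⌉₊ a ha (Nat.le_ceil a)

theorem gamma_ratio_power_tendsto (k p : ℝ) (hk : 0 < k) (hp : 1 ≤ p) :
    Tendsto (fun x : ℝ =>
        Gamma (k + x) ^ p / (Gamma x ^ (p - 1) * Gamma (k * p + x))) atTop (nhds 1) ∧
    Tendsto (fun x : ℝ =>
        (Gamma (k * p + 1) / Gamma (k + 1) ^ p) *
          (Gamma (k + x) ^ p / (Gamma x ^ (p - 1) * Gamma (k * p + x)))) atTop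
      (nhds (Gamma (k * p + 1) / Gamma (k + 1) ^ p)) := by
  have hkp : 0 < k * p := by positivity
  have hA := wendel k hk
  have hB := wendel (k * p) hkp
  have hAp : Tendsto (fun x : ℝ => (Gamma (x + k) / (Gamma x * x ^ k)) ^ p) atTop
      (nhds 1) := by
    have := hA.rpow_const (p := p) (Or.inl one_ne_zero)
    rwa [one_rpow] at this
  have hBi : Tendsto (fun x : ℝ => (Gamma (x + k * p) / (Gamma x * x ^ (k * p)))⁻¹) atTop
      (nhds 1) := by
    have := hB.inv₀ one_ne_zero
    rwa [inv_one] at this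
  have hmain : Tendsto (fun x : ℝ =>
      Gamma (k + x) ^ p / (Gamma x ^ (p - 1) * Gamma (k * p + x))) atTop (nhds 1) := by
    have h := hAp.mul hBi
    rw [one_mul] at h
    refine h.congr' ?_
    filter_upwards [eventually_gt_atTop 0] with x hx
    have hxk : 0 < x + k := by linarith
    have hxkp : 0 < x + k * p := by linarith
    have hG := Gamma_pos_of_pos hx
    have hGk := Gamma_pos_of_pos hxk
    have hGkp := Gamma_pos_of_pos hxkp
    have hxp : (0:ℝ) < x ^ k := rpow_pos_of_pos hx k
    have e1 : (Gamma (x + k) / (Gamma x * x ^ k)) ^ p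
        = Gamma (x + k) ^ p / (Gamma x ^ p * x ^ (k * p)) := by
      rw [div_rpow hGk.le (by positivity), mul_rpow hG.le hxp.le, ← rpow_mul hx.le]
    have e2 : Gamma x ^ p = Gamma x ^ (p - 1) * Gamma x := by
      rw [← rpow_add_one hG.ne' (p - 1), sub_add_cancel]
    rw [e1, inv_div, e2, add_comm k x, add_comm (k * p) x]
    have hxkp' : (0:ℝ) < x ^ (k * p) := rpow_pos_of_pos hx _
    field_simp
  refine ⟨hmain, ?_⟩
  have h := (tendsto_const_nhds (x := Gamma (k * p + 1) / Gamma (k + 1) ^ p)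
    (f := atTop (α := ℝ))).mul hmain
  rwa [mul_one] at h
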